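/- Let K be the double arrow space: the set ((0,1] × {0}) ∪ ([0,1) × {1}) equipped with the order topology of the lexicographic linear order (i.e., (x,i) < (y,j) iff x < y, or x = y and i < j). Then Eve has a winning strategy in the game BM(K, ⋆). -/

import Mathlib

/-! The classical Banach–Mazur game on a topological space. -/

section BMtop

variable {X : Type*} [TopologicalSpace X]

/-- A play of the Banach–Mazur game: a decreasing sequence of nonempty open sets. -/
def TopPlay (U : ℕ → Set X) : Prop :=
  (∀ n, IsOpen (U n)) ∧ (∀ n, (U n).Nonempty) ∧ ∀ n, U (n + 1) ⊆ U n

/-- A finite decreasing sequence of nonempty open sets (a partial play). -/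
def TopPartialPlay {m : ℕ} (v : Fin m → Set X) : Prop :=
  (∀ i, IsOpen (v i)) ∧ (∀ i, (v i).Nonempty) ∧ ∀ i j : Fin m, i ≤ j → v j ⊆ v i

/-- A strategy for Odd: a value for every finite sequence of odd length. -/
def TopOddStrategy (X : Type*) := (k : ℕ) → (Fin (2 * k + 1) → Set X) → Set X

/-- A strategy for Odd is valid if it assigns, to every finite decreasing
sequence of nonempty open sets of odd length, a nonempty open subset of its
last term. -/
def TopOddValid (s : TopOddStrategy X) : Prop :=
  ∀ (k : ℕ) (v : Fin (2 * k + 1) → Set X), TopPartialPlay v →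
    IsOpen (s k v) ∧ (s k v).Nonempty ∧ s k v ⊆ v (Fin.last (2 * k))

/-- A play follows Odd's strategy `s` if every odd-indexed term is the value of
`s` on the preceding terms. -/
def TopOddFollows (U : ℕ → Set X) (s : TopOddStrategy X) : Prop :=
  ∀ k : ℕ, U (2 * k + 1) = s k (fun i => U i.val)

/-- Odd has a winning strategy in the classical Banach–Mazur game `BM(X)`
(he wins iff the intersection of the play is nonempty). -/
def TopOddWins (X : Type*) [TopologicalSpace X] : Prop :=
  ∃ s : TopOddStrategy X, TopOddValid s ∧
    ∀ U : ℕ → Set X, TopPlay U → TopOddFollows U s → (⋂ n, U n).Nonempty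

/-- A strategy for Eve: a value for the empty sequence and for every finite
sequence of even positive length. -/
def TopEveStrategy (X : Type*) := (k : ℕ) → (Fin (2 * k) → Set X) → Set X

/-- A strategy for Eve is valid if it assigns, to every finite decreasing
sequence of nonempty open sets of even length, a nonempty open set contained in
all of its terms (for the empty sequence: just a nonempty open set). -/
def TopEveValid (e : TopEveStrategy X) : Prop :=
  ∀ (k : ℕ) (v : Fin (2 * k) → Set X), TopPartialPlay v →
    IsOpen (e k v) ∧ (e k v).Nonempty ∧ ∀ i : Fin (2 * k), e k v ⊆ v i

/-- A play follows Eve's strategy `e` if every even-indexed term is the value of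
`e` on the preceding terms. -/
def TopEveFollows (U : ℕ → Set X) (e : TopEveStrategy X) : Prop :=
  ∀ k : ℕ, U (2 * k) = e k (fun i => U i.val)

/-- Eve has a winning strategy in the classical Banach–Mazur game `BM(X)`
(she wins iff the intersection of the play is empty). -/
def TopEveWins (X : Type*) [TopologicalSpace X] : Prop :=
  ∃ e : TopEveStrategy X, TopEveValid e ∧
    ∀ U : ℕ → Set X, TopPlay U → TopEveFollows U e → ¬ (⋂ n, U n).Nonempty

/-- Odd has a winning strategy in the game `BM(X, ⋆)` (he wins iff the
intersection of the play is a one-point set). -/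
def TopOddWinsStar (X : Type*) [TopologicalSpace X] : Prop :=
  ∃ s : TopOddStrategy X, TopOddValid s ∧
    ∀ U : ℕ → Set X, TopPlay U → TopOddFollows U s → ∃ x : X, (⋂ n, U n) = {x}

/-- Eve has a winning strategy in the game `BM(X, ⋆)` (she wins iff the
intersection of the play is not a one-point set). -/
def TopEveWinsStar (X : Type*) [TopologicalSpace X] : Prop :=
  ∃ e : TopEveStrategy X, TopEveValid e ∧
    ∀ U : ℕ → Set X, TopPlay U → TopEveFollows U e → ¬ ∃ x : X, (⋂ n, U n) = {x}

/-- A topological space is completely metrizable if its topology is induced by a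
complete metric. -/
def IsCompletelyMetrizable (Y : Type*) [t : TopologicalSpace Y] : Prop :=
  ∃ m : MetricSpace Y, m.toUniformSpace.toTopologicalSpace = t ∧
    @CompleteSpace Y m.toUniformSpace

end BMtop

/-! The double arrow space: `((0,1] × {0}) ∪ ([0,1) × {1})` with the order
topology of the lexicographic order (with `false < true` in `Bool`). -/

/-- The underlying set of the double arrow space, inside the lexicographic
product `ℝ ×ₗ Bool`. -/
def DoubleArrow : Type :=
  {p : ℝ ×ₗ Bool //
    (0 < (ofLex p).1 ∧ (ofLex p).1 ≤ 1 ∧ (ofLex p).2 = false) ∨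
    (0 ≤ (ofLex p).1 ∧ (ofLex p).1 < 1 ∧ (ofLex p).2 = true)}

noncomputable instance : LinearOrder DoubleArrow :=
  inferInstanceAs (LinearOrder {p : ℝ ×ₗ Bool // _})

/-- The double arrow space carries the order topology of its linear order. -/
noncomputable instance : TopologicalSpace DoubleArrow := Preorder.topology DoubleArrow

instance : OrderTopology DoubleArrow := ⟨rfl⟩

namespace DoubleArrowAux

open Set

noncomputable section

/-- first coordinate -/
def xc (p : DoubleArrow) : ℝ := (ofLex p.val).1
/-- second coordinate -/
def bc (p : DoubleArrow) : Bool := (ofLex p.val).2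

lemma val_eq (p : DoubleArrow) : p.val = toLex (xc p, bc p) := rfl

/-- build a point of the double arrow space -/
def pt (x : ℝ) (i : Bool)
    (h : (0 < x ∧ x ≤ 1 ∧ i = false) ∨ (0 ≤ x ∧ x < 1 ∧ i = true)) : DoubleArrow :=
  ⟨toLex (x, i), h⟩

instance : Nonempty DoubleArrow :=
  ⟨pt (1/2) true (Or.inr ⟨by norm_num, by norm_num, rfl⟩)⟩

@[simp] lemma xc_pt (x : ℝ) (i : Bool) (h) : xc (pt x i h) = x := rfl
@[simp] lemma bc_pt (x : ℝ) (i : Bool) (h) : bc (pt x i h) = i := rfl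

lemma lt_iff' {p q : DoubleArrow} :
    p < q ↔ xc p < xc q ∨ (xc p = xc q ∧ bc p = false ∧ bc q = true) := by
  change p.val < q.val ↔ _
  rw [val_eq p, val_eq q, Prod.Lex.lt_iff]
  simp [Bool.lt_iff]

/-- The basic clopen blocks. -/
def Blk (a b : ℝ) : Set DoubleArrow :=
  {p | toLex (a, false) < p.val ∧ p.val < toLex (b, true)}

lemma mem_Blk {a b : ℝ} {p : DoubleArrow} :
    p ∈ Blk a b ↔ (a < xc p ∨ (a = xc p ∧ bc p = true)) ∧
      (xc p < b ∨ (xc p = b ∧ bc p = false)) := by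
  rw [Blk, mem_setOf_eq, val_eq p, Prod.Lex.lt_iff, Prod.Lex.lt_iff]
  simp [Bool.lt_iff]

lemma pt_mem_Blk {a b x : ℝ} {i : Bool} {h} (h1 : a < x) (h2 : x < b) :
    pt x i h ∈ Blk a b :=
  mem_Blk.2 ⟨Or.inl h1, Or.inl h2⟩

lemma Blk_mono {a b c d : ℝ} (hac : a ≤ c) (hdb : d ≤ b) : Blk c d ⊆ Blk a b := by
  intro p hp
  rw [mem_Blk] at hp ⊢
  constructor
  · rcases hp.1 with h | ⟨h, hi⟩
    · exact Or.inl (lt_of_le_of_lt hac h)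
    · rcases lt_or_eq_of_le (hac.trans h.le) with h' | h'
      · exact Or.inl h'
      · exact Or.inr ⟨h', hi⟩
  · rcases hp.2 with h | ⟨h, hi⟩
    · exact Or.inl (lt_of_lt_of_le h hdb)
    · rcases lt_or_eq_of_le ((le_of_eq h).trans hdb) with h' | h'
      · exact Or.inl h'
      · exact Or.inr ⟨h', hi⟩

lemma Blk_nonempty {a b : ℝ} (ha : 0 ≤ a) (hab : a < b) (hb : b ≤ 1) :
    (Blk a b).Nonempty :=
  ⟨pt ((a + b) / 2) true (Or.inr ⟨by linarith, by linarith, rfl⟩),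
    pt_mem_Blk (by linarith) (by linarith)⟩

lemma isOpen_Blk {a b : ℝ} (ha : 0 ≤ a) (hab : a < b) (hb : b ≤ 1) :
    IsOpen (Blk a b) := by
  have hL : IsOpen {p : DoubleArrow | toLex (a, false) < p.val} := by
    rcases ha.lt_or_eq with h0 | h0
    · have he : {p : DoubleArrow | toLex (a, false) < p.val}
          = Ioi (pt a false (Or.inl ⟨h0, hab.le.trans hb, rfl⟩)) := by
        ext p
        simp only [mem_setOf_eq, mem_Ioi]
        constructor
        · intro h; exact h
        · intro h; exact h
      rw [he]; exact isOpen_Ioi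
    · have he : {p : DoubleArrow | toLex (a, false) < p.val} = univ := by
        ext p
        simp only [mem_setOf_eq, mem_univ, iff_true]
        rw [val_eq p, Prod.Lex.lt_iff]
        rcases p.2 with ⟨hx, _, _⟩ | ⟨hx, _, hi⟩
        · exact Or.inl (by rw [← h0]; exact hx)
        · rcases lt_or_eq_of_le hx with h | h
          · exact Or.inl (by rw [← h0]; exact h)
          · exact Or.inr ⟨by rw [← h0]; exact h, by simp [Bool.lt_iff]; exact hi⟩
      rw [he]; exact isOpen_univ
  have hR : IsOpen {p : DoubleArrow | p.val < toLex (b, true)} := by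
    rcases lt_or_eq_of_le hb with h1 | h1
    · have he : {p : DoubleArrow | p.val < toLex (b, true)}
          = Iio (pt b true (Or.inr ⟨ha.trans hab.le, h1, rfl⟩)) := by
        ext p
        simp only [mem_setOf_eq, mem_Iio]
        constructor
        · intro h; exact h
        · intro h; exact h
      rw [he]; exact isOpen_Iio
    · have he : {p : DoubleArrow | p.val < toLex (b, true)} = univ := by
        ext p
        simp only [mem_setOf_eq, mem_univ, iff_true]
        rw [val_eq p, Prod.Lex.lt_iff]
        rcases p.2 with ⟨_, hx, hi⟩ | ⟨_, hx, _⟩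
        · rcases lt_or_eq_of_le hx with h | h
          · exact Or.inl (by rw [h1]; exact h)
          · exact Or.inr ⟨by rw [h1]; exact h, by simp [Bool.lt_iff]; exact hi⟩
        · exact Or.inl (by rw [h1]; exact hx)
      rw [he]; exact isOpen_univ
  exact hL.inter hR

lemma density {U : Set DoubleArrow} (hU : IsOpen U) (hne : U.Nonempty) :
    ∃ a b : ℝ, 0 ≤ a ∧ a < b ∧ b ≤ 1 ∧ Blk a b ⊆ U := by
  obtain ⟨p, hp⟩ := hne
  have hnp : U ∈ nhds p := hU.mem_nhds hp
  rcases p.2 with ⟨h1, h2, h3⟩ | ⟨h1, h2, h3⟩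
  · -- bc p = false, 0 < xc p ≤ 1
    have h3' : bc p = false := h3
    have hl : pt 0 true (Or.inr ⟨le_refl 0, zero_lt_one, rfl⟩) < p :=
      lt_iff'.2 (Or.inl h1)
    obtain ⟨l, hlp, hsub⟩ := exists_Ioc_subset_of_mem_nhds hnp ⟨_, hl⟩
    have hyx : xc l < xc p := by
      rcases lt_iff'.1 hlp with h | ⟨_, _, ht⟩
      · exact h
      · rw [h3'] at ht; exact absurd ht (by simp)
    have hy0 : 0 ≤ xc l := by
      rcases l.2 with ⟨h, _, _⟩ | ⟨h, _, _⟩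
      exacts [h.le, h]
    refine ⟨(xc l + xc p) / 2, xc p, by linarith, by linarith, h2, ?_⟩
    intro q hq
    rw [mem_Blk] at hq
    apply hsub
    constructor
    · -- l < q
      have hle : (xc l + xc p) / 2 ≤ xc q := by
        rcases hq.1 with h | ⟨h, _⟩
        exacts [h.le, le_of_eq h]
      exact lt_iff'.2 (Or.inl (by linarith))
    · -- q ≤ p
      rcases hq.2 with h | ⟨heq, hqf⟩
      · exact (lt_iff'.2 (Or.inl h)).le
      · have hqp : q = p := Subtype.ext (by rw [val_eq q, val_eq p, heq, hqf, h3'])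
        exact hqp.le
  · -- bc p = true, 0 ≤ xc p < 1
    have h3' : bc p = true := h3
    have hu : p < pt 1 false (Or.inl ⟨one_pos, le_refl 1, rfl⟩) :=
      lt_iff'.2 (Or.inl h2)
    obtain ⟨u, hpu, hsub⟩ := exists_Ico_subset_of_mem_nhds hnp ⟨_, hu⟩
    have hxy : xc p < xc u := by
      rcases lt_iff'.1 hpu with h | ⟨_, hf, _⟩
      · exact h
      · rw [h3'] at hf; exact absurd hf (by simp)
    have hy1 : xc u ≤ 1 := by
      rcases u.2 with ⟨_, h, _⟩ | ⟨_, h, _⟩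
      exacts [h, h.le]
    refine ⟨xc p, (xc p + xc u) / 2, h1, by linarith, by linarith, ?_⟩
    intro q hq
    rw [mem_Blk] at hq
    apply hsub
    constructor
    · -- p ≤ q
      rcases hq.1 with h | ⟨heq, hqt⟩
      · exact (lt_iff'.2 (Or.inl h)).le
      · have hqp : q = p := Subtype.ext (by rw [val_eq q, val_eq p, ← heq, hqt, h3'])
        exact hqp.ge
    · -- q < u
      have hle : xc q ≤ (xc p + xc u) / 2 := by
        rcases hq.2 with h | ⟨h, _⟩
        exacts [h.le, le_of_eq h]
      exact lt_iff'.2 (Or.inl (by linarith))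

lemma Blk_cmp {a b c d : ℝ} (ha : 0 ≤ a) (hab : a < b) (hb : b ≤ 1)
    (hsub : Blk a b ⊆ Blk c d) : c ≤ a ∧ b ≤ d := by
  constructor
  · by_contra hcon
    push_neg at hcon  -- a < c
    have h1 : a < min b c := lt_min hab hcon
    set t := (a + min b c) / 2 with ht
    have h2 : a < t := by rw [ht]; linarith
    have h3 : t < min b c := by rw [ht]; linarith
    have htb : t < b := h3.trans_le (min_le_left _ _)
    have htc : t < c := h3.trans_le (min_le_right _ _)
    have hmem := hsub (pt_mem_Blk (i := true)
      (h := Or.inr ⟨ha.trans h2.le, lt_of_lt_of_le htb hb, rfl⟩) h2 htb)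
    rw [mem_Blk] at hmem
    have hct : c ≤ t := by
      rcases hmem.1 with h' | ⟨h', _⟩
      · simp only [xc_pt] at h'; exact h'.le
      · simp only [xc_pt] at h'; exact le_of_eq h'
    linarith
  · by_contra hcon
    push_neg at hcon  -- d < b
    have h1 : max a d < b := max_lt hab hcon
    set t := (max a d + b) / 2 with ht
    have h2 : max a d < t := by rw [ht]; linarith
    have h3 : t < b := by rw [ht]; linarith
    have hat : a < t := lt_of_le_of_lt (le_max_left _ _) h2
    have hdt : d < t := lt_of_le_of_lt (le_max_right _ _) h2
    have ht0 : 0 < t := lt_of_le_of_lt ha hat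
    have hmem := hsub (pt_mem_Blk (i := false)
      (h := Or.inl ⟨ht0, h3.le.trans hb, rfl⟩) hat h3)
    rw [mem_Blk] at hmem
    have htd : t ≤ d := by
      rcases hmem.2 with h' | ⟨h', _⟩
      · simp only [xc_pt] at h'; exact h'.le
      · simp only [xc_pt] at h'; exact le_of_eq h'
    linarith

/-- a choice of a block inside an open set -/
def pick (U : Set DoubleArrow) : ℝ × ℝ :=
  haveI := Classical.propDecidable (IsOpen U ∧ U.Nonempty)
  if h : IsOpen U ∧ U.Nonempty then
    ⟨(density h.1 h.2).choose, (density h.1 h.2).choose_spec.choose⟩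
  else ⟨0, 1⟩

lemma pick_spec {U : Set DoubleArrow} (h : IsOpen U) (h' : U.Nonempty) :
    0 ≤ (pick U).1 ∧ (pick U).1 < (pick U).2 ∧ (pick U).2 ≤ 1 ∧
      Blk (pick U).1 (pick U).2 ⊆ U := by
  unfold pick
  rw [dif_pos (⟨h, h'⟩ : IsOpen U ∧ U.Nonempty)]
  exact (density h h').choose_spec.choose_spec

/-- Eve's move: the middle third of the chosen block -/
def lo (U : Set DoubleArrow) : ℝ := (pick U).1 + ((pick U).2 - (pick U).1) / 3
def hi (U : Set DoubleArrow) : ℝ := (pick U).2 - ((pick U).2 - (pick U).1) / 3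

lemma lohi_bounds {U : Set DoubleArrow} (h : IsOpen U) (h' : U.Nonempty) :
    0 ≤ lo U ∧ lo U < hi U ∧ hi U ≤ 1 := by
  obtain ⟨h0, h1, h2, _⟩ := pick_spec h h'
  refine ⟨?_, ?_, ?_⟩ <;> (simp only [lo, hi]; linarith)

lemma Blk_lohi_subset {U : Set DoubleArrow} (h : IsOpen U) (h' : U.Nonempty) :
    Blk (lo U) (hi U) ⊆ U := by
  obtain ⟨h0, h1, h2, h3⟩ := pick_spec h h'
  exact (Blk_mono (by simp only [lo]; linarith) (by simp only [hi]; linarith)).trans h3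

lemma lohi_strict {U : Set DoubleArrow} (h : IsOpen U) (h' : U.Nonempty)
    {p q : ℝ} (hsub : U ⊆ Blk p q) : p < lo U ∧ hi U < q := by
  obtain ⟨h0, h1, h2, h3⟩ := pick_spec h h'
  obtain ⟨hc1, hc2⟩ := Blk_cmp h0 h1 h2 (h3.trans hsub)
  constructor
  · simp only [lo]; linarith
  · simp only [hi]; linarith

/-- Eve's strategy -/
def eve : TopEveStrategy DoubleArrow
  | 0, _ => Blk (lo univ) (hi univ)
  | (k+1), v => Blk (lo (v ⟨2*k+1, by omega⟩)) (hi (v ⟨2*k+1, by omega⟩))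

lemma eve_valid : TopEveValid eve := by
  intro k v hv
  cases k with
  | zero =>
    simp only [eve]
    obtain ⟨h0, h1, h2⟩ := lohi_bounds isOpen_univ univ_nonempty
    exact ⟨isOpen_Blk h0 h1 h2, Blk_nonempty h0 h1 h2, fun i => i.elim0⟩
  | succ k =>
    simp only [eve]
    have hWo : IsOpen (v ⟨2*k+1, by omega⟩) := hv.1 _
    have hWn : (v ⟨2*k+1, by omega⟩).Nonempty := hv.2.1 _
    obtain ⟨h0, h1, h2⟩ := lohi_bounds hWo hWn
    refine ⟨isOpen_Blk h0 h1 h2, Blk_nonempty h0 h1 h2, fun i => ?_⟩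
    refine (Blk_lohi_subset hWo hWn).trans (hv.2.2 i ⟨2*k+1, by omega⟩ ?_)
    rw [Fin.le_def]
    have := i.isLt
    simp only []
    omega

/-- the sequence of Odd's relevant moves (with a dummy first term) -/
def Wseq (U : ℕ → Set DoubleArrow) : ℕ → Set DoubleArrow
  | 0 => univ
  | (k+1) => U (2*k+1)

lemma eve_wins (U : ℕ → Set DoubleArrow) (hplay : TopPlay U)
    (hfol : TopEveFollows U eve) : ¬ ∃ x, (⋂ n, U n) = {x} := by
  obtain ⟨hopen, hne, hdec⟩ := hplay
  have hmono : Antitone U := antitone_nat_of_succ_le hdec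
  have hWo : ∀ k, IsOpen (Wseq U k) := by
    rintro (_ | k)
    exacts [isOpen_univ, hopen _]
  have hWn : ∀ k, (Wseq U k).Nonempty := by
    rintro (_ | k)
    exacts [univ_nonempty, hne _]
  have hU2 : ∀ k, U (2*k) = Blk (lo (Wseq U k)) (hi (Wseq U k)) := by
    rintro (_ | k)
    · simpa [eve, Wseq] using hfol 0
    · simpa [eve, Wseq] using hfol (k+1)
  have key : ∀ k, 0 ≤ lo (Wseq U k) ∧ lo (Wseq U k) < hi (Wseq U k) ∧ hi (Wseq U k) ≤ 1 :=
    fun k => lohi_bounds (hWo k) (hWn k)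
  have step : ∀ k, lo (Wseq U k) < lo (Wseq U (k+1)) ∧ hi (Wseq U (k+1)) < hi (Wseq U k) := by
    intro k
    have hsub : U (2*k+1) ⊆ Blk (lo (Wseq U k)) (hi (Wseq U k)) := by
      rw [← hU2 k]; exact hmono (by omega)
    have := lohi_strict (hopen (2*k+1)) (hne (2*k+1)) hsub
    simpa [Wseq] using this
  have hAmono : StrictMono (fun k => lo (Wseq U k)) :=
    strictMono_nat_of_lt_succ (fun k => (step k).1)
  have hBanti : StrictAnti (fun k => hi (Wseq U k)) :=
    strictAnti_nat_of_succ_lt (fun k => (step k).2)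
  have cross : ∀ j k, lo (Wseq U j) < hi (Wseq U k) := by
    intro j k
    calc lo (Wseq U j) ≤ lo (Wseq U (max j k)) := hAmono.monotone (le_max_left _ _)
    _ < hi (Wseq U (max j k)) := (key _).2.1
    _ ≤ hi (Wseq U k) := hBanti.antitone (le_max_right _ _)
  have bddA : BddAbove (Set.range (fun k => lo (Wseq U k))) :=
    ⟨hi (Wseq U 0), by rintro _ ⟨j, rfl⟩; exact (cross j 0).le⟩
  have bddB : BddBelow (Set.range (fun k => hi (Wseq U k))) :=
    ⟨lo (Wseq U 0), by rintro _ ⟨j, rfl⟩; exact (cross 0 j).le⟩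
  have hA_lt : ∀ k, lo (Wseq U k) < ⨆ j, lo (Wseq U j) :=
    fun k => lt_of_lt_of_le (step k).1 (le_ciSup bddA (k+1))
  have hB_gt : ∀ k, (⨅ j, hi (Wseq U j)) < hi (Wseq U k) :=
    fun k => lt_of_le_of_lt (ciInf_le bddB (k+1)) (step k).2
  have hab : (⨆ j, lo (Wseq U j)) ≤ ⨅ j, hi (Wseq U j) :=
    ciSup_le (fun j => le_ciInf (fun k => (cross j k).le))
  set c := ((⨆ j, lo (Wseq U j)) + ⨅ j, hi (Wseq U j)) / 2 with hc
  have hc1 : ∀ k, lo (Wseq U k) < c := fun k => by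
    have := hA_lt k; rw [hc]; linarith
  have hc2 : ∀ k, c < hi (Wseq U k) := fun k => by
    have := hB_gt k; rw [hc]; linarith
  have hc0 : 0 < c := lt_of_le_of_lt (key 0).1 (hc1 0)
  have hc3 : c < 1 := lt_of_lt_of_le (hc2 0) (key 0).2.2
  rintro ⟨x, hx⟩
  have hmem : ∀ (i : Bool) h, pt c i h ∈ ⋂ n, U n := by
    intro i h
    rw [mem_iInter]
    intro n
    have hm : pt c i h ∈ U (2*n) := by
      rw [hU2 n]; exact pt_mem_Blk (hc1 n) (hc2 n)
    exact hmono (by omega : n ≤ 2*n) hm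
  have h1 := hmem false (Or.inl ⟨hc0, hc3.le, rfl⟩)
  have h2 := hmem true (Or.inr ⟨hc0.le, hc3, rfl⟩)
  rw [hx, mem_singleton_iff] at h1 h2
  have hcontra := congrArg bc (h1.trans h2.symm)
  simpa using hcontra

end

end DoubleArrowAux

/-- Eve has a winning strategy in the game `BM(K, ⋆)` played
on the double arrow space `K`. -/
theorem eve_wins_star_doubleArrow : TopEveWinsStar DoubleArrow :=
  ⟨DoubleArrowAux.eve, DoubleArrowAux.eve_valid, DoubleArrowAux.eve_wins⟩
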